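/- Two orthogonal positively represented pure states cannot both have strictly positive Wigner function at the same phase space point: let v₀, v₁ : ZMod d → ℂ be vectors with Σ_x conj(v₀ x) * (v₁ x) = 0, and let P₀ = v₀ v₀ᴴ and P₁ = v₁ v₁ᴴ be the corresponding rank-one matrices (P_i x y = v_i x * conj(v_i y)). If for all w ∈ ZMod d × ZMod d the real parts of trace(A_w * P₀) and trace(A_w * P₁) are nonnegative, and for some u the real part of trace(A_u * P₀) is strictly positive, then trace(A_u * P₁) = 0. -/
import Mathlib


open Matrix Complex

/-- ω = exp(2πi/d). -/
noncomputable def omegaC (d : ℕ) : ℂ := Complex.exp (2 * Real.pi * Complex.I / d)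

/-- The clock matrix `Z`, with `Z x x = ω ^ x.val`. -/
noncomputable def Zmat (d : ℕ) : Matrix (ZMod d) (ZMod d) ℂ :=
  Matrix.diagonal (fun x => omegaC d ^ x.val)

/-- The shift matrix `X`, with `X x y = 1` iff `x = y + 1`. -/
noncomputable def Xmat (d : ℕ) : Matrix (ZMod d) (ZMod d) ℂ :=
  Matrix.of fun x y => if x = y + 1 then 1 else 0

/-- The Heisenberg–Weyl operator `T_a`. -/
noncomputable def TW (d : ℕ) [NeZero d] (a : ZMod d × ZMod d) : Matrix (ZMod d) (ZMod d) ℂ :=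
  omegaC d ^ ((-((2 : ZMod d)⁻¹ * a.1 * a.2)).val) • (Zmat d ^ a.1.val * Xmat d ^ a.2.val)

/-- The phase point operator at the origin, `A_0 = (1/d) • ∑ a, T_a`. -/
noncomputable def Apoint0 (d : ℕ) [NeZero d] : Matrix (ZMod d) (ZMod d) ℂ :=
  (1 / (d : ℂ)) • ∑ a : ZMod d × ZMod d, TW d a

/-- The phase point operator `A_u = T_u * A_0 * T_uᴴ`. -/
noncomputable def Apoint (d : ℕ) [NeZero d] (u : ZMod d × ZMod d) : Matrix (ZMod d) (ZMod d) ℂ :=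
  TW d u * Apoint0 d * (TW d u)ᴴ

noncomputable def chiC (d : ℕ) [NeZero d] (k : ZMod d) : ℂ := omegaC d ^ k.val

variable {d : ℕ} [NeZero d]

lemma omega_prim : IsPrimitiveRoot (omegaC d) d :=
  Complex.isPrimitiveRoot_exp d (NeZero.ne d)

lemma omega_pow_d : omegaC d ^ d = 1 := (omega_prim (d := d)).pow_eq_one

lemma chiC_natCast (n : ℕ) : chiC d (n : ZMod d) = omegaC d ^ n := by
  rw [chiC, ZMod.val_natCast]
  conv_rhs => rw [← Nat.div_add_mod n d]
  rw [pow_add, pow_mul, omega_pow_d, one_pow, one_mul]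

lemma chiC_zero : chiC d 0 = 1 := by simp [chiC]

lemma chiC_add (a b : ZMod d) : chiC d (a + b) = chiC d a * chiC d b := by
  have h : a + b = ((a.val + b.val : ℕ) : ZMod d) := by
    push_cast
    simp [ZMod.natCast_val, ZMod.cast_id]
  rw [h, chiC_natCast, pow_add]; rfl

lemma chiC_eq_one_iff (a : ZMod d) : chiC d a = 1 ↔ a = 0 := by
  rw [chiC, (omega_prim (d := d)).pow_eq_one_iff_dvd]
  constructor
  · intro h
    exact (ZMod.val_eq_zero a).mp (Nat.eq_zero_of_dvd_of_lt h (ZMod.val_lt a))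
  · rintro rfl; simp

lemma conj_chiC (a : ZMod d) : (starRingEnd ℂ) (chiC d a) = chiC d (-a) := by
  have h1 : chiC d a * chiC d (-a) = 1 := by
    rw [← chiC_add]; simp [chiC_zero]
  have hconj : (starRingEnd ℂ) (omegaC d) = (omegaC d)⁻¹ := by
    rw [omegaC, ← Complex.exp_conj, ← Complex.exp_neg]
    congr 1
    simp [map_div₀, Complex.conj_I, Complex.conj_ofReal, map_ofNat]
    ring
  have h2 : (starRingEnd ℂ) (chiC d a) * chiC d a = 1 := by
    rw [chiC, map_pow, hconj, ← mul_pow, inv_mul_cancel₀, one_pow]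
    exact (omega_prim (d := d)).ne_zero (NeZero.ne d)
  calc (starRingEnd ℂ) (chiC d a) = (starRingEnd ℂ) (chiC d a) * (chiC d a * chiC d (-a)) := by rw [h1, mul_one]
    _ = ((starRingEnd ℂ) (chiC d a) * chiC d a) * chiC d (-a) := by ring
    _ = chiC d (-a) := by rw [h2, one_mul]

lemma chiC_mul_natCast (a : ZMod d) (c : ZMod d) : chiC d (a * c) = (chiC d c) ^ a.val := by
  have h : a * c = ((a.val * c.val : ℕ) : ZMod d) := by
    push_cast
    simp [ZMod.natCast_val, ZMod.cast_id]
  rw [h, chiC_natCast, mul_comm a.val, pow_mul]; rfl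

lemma sum_chiC (c : ZMod d) :
    ∑ a : ZMod d, chiC d (a * c) = if c = 0 then (d : ℂ) else 0 := by
  split_ifs with h
  · subst h; simp [chiC_zero, Finset.card_univ, ZMod.card]
  · simp only [chiC_mul_natCast]
    have hz : chiC d c ≠ 1 := fun hc => h ((chiC_eq_one_iff c).mp hc)
    have hre : ∑ a : ZMod d, (chiC d c) ^ a.val = ∑ i ∈ Finset.range d, (chiC d c) ^ i := by
      apply Finset.sum_nbij' (i := fun (a : ZMod d) => a.val) (j := fun i => (i : ZMod d))
      · intro a _; exact Finset.mem_range.mpr (ZMod.val_lt a)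
      · intro i _; exact Finset.mem_univ _
      · intro a _; simp [ZMod.natCast_val, ZMod.cast_id]
      · intro i hi; exact ZMod.val_natCast_of_lt (Finset.mem_range.mp hi)
      · intro a _; rfl
    rw [hre, geom_sum_eq hz]
    rw [chiC, ← pow_mul, mul_comm, pow_mul, omega_pow_d, one_pow, sub_self, zero_div]






lemma Xmat_pow_apply (n : ℕ) (x y : ZMod d) :
    (Xmat d ^ n) x y = if x = y + (n : ZMod d) then 1 else 0 := by
  induction n generalizing x y with
  | zero => simp [Matrix.one_apply]
  | succ n ih =>
    rw [pow_succ, Matrix.mul_apply]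
    rw [Finset.sum_eq_single (y + 1)]
    · rw [ih]
      have hx : Xmat d (y+1) y = 1 := by simp [Xmat]
      rw [hx, mul_one]
      have : y + 1 + (n : ZMod d) = y + ((n : ℕ) + 1 : ℕ) := by push_cast; ring
      rw [this]
    · intro z _ hz
      have hx : Xmat d z y = 0 := by
        simp only [Xmat, Matrix.of_apply, ite_eq_right_iff]
        intro h; exact absurd h hz
      rw [hx, mul_zero]
    · intro h; exact absurd (Finset.mem_univ _) h

lemma Zmat_pow_apply (n : ℕ) (x y : ZMod d) :
    (Zmat d ^ n) x y = if x = y then omegaC d ^ (n * x.val) else 0 := by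
  rw [Zmat, Matrix.diagonal_pow, Matrix.diagonal_apply]
  congr 1
  rw [Pi.pow_apply, ← pow_mul, mul_comm]

lemma TW_apply (a : ZMod d × ZMod d) (x y : ZMod d) :
    TW d a x y = if y = x - a.2 then
      chiC d (-((2 : ZMod d)⁻¹ * a.1 * a.2) + a.1 * x) else 0 := by
  rw [TW, Matrix.smul_apply, Matrix.mul_apply]
  rw [Finset.sum_eq_single x]
  · rw [Zmat_pow_apply, if_pos rfl, Xmat_pow_apply]
    have hc : (x = y + (a.2.val : ZMod d)) ↔ (y = x - a.2) := by
      rw [ZMod.natCast_val, ZMod.cast_id]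
      constructor
      · rintro rfl; ring
      · rintro rfl; ring
    by_cases h : y = x - a.2
    · rw [if_pos (hc.mpr h), if_pos h, mul_one, smul_eq_mul]
      rw [chiC_add, chiC_mul_natCast]
      congr 1
      rw [chiC, ← pow_mul, mul_comm]
    · rw [if_neg (fun hh => h (hc.mp hh)), if_neg h, mul_zero, smul_zero]
  · intro z _ hz
    rw [Zmat_pow_apply, if_neg (fun hh => hz hh.symm), zero_mul]
  · intro h; exact absurd (Finset.mem_univ _) h

lemma isUnit_two (hodd : Odd d) : IsUnit (2 : ZMod d) := by
  have := (ZMod.isUnit_iff_coprime 2 d).mpr (Nat.coprime_two_left.mpr hodd)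
  simpa using this

lemma two_inv_mul_two (hodd : Odd d) : (2 : ZMod d)⁻¹ * 2 = 1 :=
  ZMod.inv_mul_of_unit _ (isUnit_two hodd)

lemma two_mul_eq_zero_iff (hodd : Odd d) (t : ZMod d) : 2 * t = 0 ↔ t = 0 := by
  constructor
  · intro h
    have := congrArg (fun z => (2 : ZMod d)⁻¹ * z) h
    simpa [← mul_assoc, two_inv_mul_two hodd] using this
  · rintro rfl; ring

lemma two_inv_mul_eq_zero_iff (hodd : Odd d) (t : ZMod d) : (2 : ZMod d)⁻¹ * t = 0 ↔ t = 0 := by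
  constructor
  · intro h
    have := congrArg (fun z => (2 : ZMod d) * z) h
    simp only [← mul_assoc, mul_zero] at this
    rw [mul_comm (2 : ZMod d), two_inv_mul_two hodd, one_mul] at this
    exact this
  · rintro rfl; ring

lemma Apoint0_apply (hodd : Odd d) (x y : ZMod d) :
    Apoint0 d x y = if y = -x then 1 else 0 := by
  rw [Apoint0, Matrix.smul_apply, Matrix.sum_apply]
  rw [Fintype.sum_prod_type]
  have hinner : ∀ a₁ : ZMod d,
      ∑ a₂ : ZMod d, TW d (a₁, a₂) x y
        = chiC d (-((2 : ZMod d)⁻¹ * a₁ * (x - y)) + a₁ * x) := by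
    intro a₁
    rw [Finset.sum_eq_single (x - y)]
    · rw [TW_apply]
      simp only
      rw [if_pos (by ring)]
    · intro a₂ _ ha
      rw [TW_apply]
      simp only
      rw [if_neg]
      intro h
      exact ha (by rw [h]; ring)
    · intro h; exact absurd (Finset.mem_univ _) h
  simp only [hinner]
  have harg : ∀ a₁ : ZMod d,
      -((2 : ZMod d)⁻¹ * a₁ * (x - y)) + a₁ * x = a₁ * ((2 : ZMod d)⁻¹ * (x + y)) := by
    intro a₁
    have ht := two_inv_mul_two hodd
    linear_combination (-(a₁ * x)) * ht
  simp only [harg]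
  rw [sum_chiC]
  have hcond : ((2 : ZMod d)⁻¹ * (x + y) = 0) ↔ (y = -x) := by
    rw [two_inv_mul_eq_zero_iff hodd]
    constructor
    · intro h; linear_combination h
    · rintro rfl; ring
  by_cases h : y = -x
  · rw [if_pos (hcond.mpr h), if_pos h, smul_eq_mul, one_div,
      inv_mul_cancel₀ (Nat.cast_ne_zero.mpr (NeZero.ne d))]
  · rw [if_neg (fun hh => h (hcond.mp hh)), if_neg h, smul_zero]

lemma Apoint_apply (hodd : Odd d) (u : ZMod d × ZMod d) (x y : ZMod d) :
    Apoint d u x y = if y = 2 * u.2 - x then chiC d (2 * u.1 * (x - u.2)) else 0 := by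
  have hTA : ∀ w, (TW d u * Apoint0 d) x w =
      (if w = u.2 - x then chiC d (-((2 : ZMod d)⁻¹ * u.1 * u.2) + u.1 * x) else 0) := by
    intro w
    rw [Matrix.mul_apply, Finset.sum_eq_single (x - u.2)]
    · rw [TW_apply, if_pos rfl, Apoint0_apply hodd]
      by_cases h : w = u.2 - x
      · rw [if_pos (by rw [h]; ring), if_pos h, mul_one]
      · rw [if_neg (fun hh => h (by rw [hh]; ring)), mul_zero, if_neg h]
    · intro z _ hz
      rw [TW_apply, if_neg hz, zero_mul]
    · intro h; exact absurd (Finset.mem_univ _) h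
  rw [Apoint, Matrix.mul_apply]
  simp only [hTA, Matrix.conjTranspose_apply]
  rw [Finset.sum_eq_single (u.2 - x)]
  · rw [if_pos rfl, TW_apply]
    by_cases h : y = 2 * u.2 - x
    · rw [if_pos (show u.2 - x = y - u.2 by rw [h]; ring), if_pos h]
      rw [Complex.star_def, conj_chiC, ← chiC_add]
      subst h
      congr 1
      ring
    · rw [if_neg (fun hh => h (by linear_combination -hh)), star_zero, mul_zero, if_neg h]
  · intro w _ hw
    rw [if_neg hw, zero_mul]
  · intro h; exact absurd (Finset.mem_univ _) h

lemma trace_Apoint_mul (hodd : Odd d) (u : ZMod d × ZMod d) (v : ZMod d → ℂ) :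
    (Apoint d u * Matrix.of fun x y => v x * (starRingEnd ℂ) (v y)).trace
      = ∑ x : ZMod d, chiC d (2 * u.1 * (x - u.2)) * (v (2 * u.2 - x) * (starRingEnd ℂ) (v x)) := by
  rw [Matrix.trace]
  apply Finset.sum_congr rfl
  intro x _
  rw [Matrix.diag_apply, Matrix.mul_apply, Finset.sum_eq_single (2 * u.2 - x)]
  · rw [Apoint_apply hodd, if_pos rfl, Matrix.of_apply]
  · intro y _ hy
    rw [Apoint_apply hodd, if_neg hy, zero_mul]
  · intro h; exact absurd (Finset.mem_univ _) h

lemma trace_sum_conj (u : ZMod d × ZMod d) (v : ZMod d → ℂ) :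
    (starRingEnd ℂ) (∑ x : ZMod d,
        chiC d (2 * u.1 * (x - u.2)) * (v (2 * u.2 - x) * (starRingEnd ℂ) (v x)))
      = ∑ x : ZMod d,
        chiC d (2 * u.1 * (x - u.2)) * (v (2 * u.2 - x) * (starRingEnd ℂ) (v x)) := by
  rw [map_sum]
  refine Fintype.sum_equiv (Equiv.subLeft (2 * u.2)) _ _ (fun x => ?_)
  simp only [Equiv.subLeft_apply, _root_.map_mul, conj_chiC, Complex.conj_conj]
  have h1 : 2 * u.2 - (2 * u.2 - x) = x := by ring
  have h2 : -(2 * u.1 * (x - u.2)) = 2 * u.1 * (2 * u.2 - x - u.2) := by ring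
  rw [h1, h2]
  ring

lemma sum_trace_mul (hodd : Odd d) (v₀ v₁ : ZMod d → ℂ) :
    (∑ w : ZMod d × ZMod d,
      (∑ x : ZMod d, chiC d (2 * w.1 * (x - w.2)) * (v₀ (2 * w.2 - x) * (starRingEnd ℂ) (v₀ x))) *
      (∑ y : ZMod d, chiC d (2 * w.1 * (y - w.2)) * (v₁ (2 * w.2 - y) * (starRingEnd ℂ) (v₁ y))))
    = (d : ℂ) * ((∑ z : ZMod d, v₀ z * (starRingEnd ℂ) (v₁ z)) *
        (∑ x : ZMod d, (starRingEnd ℂ) (v₀ x) * v₁ x)) := by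
  rw [Fintype.sum_prod_type_right]
  have inner1 : ∀ w₂ : ZMod d,
      (∑ w₁ : ZMod d,
        (∑ x : ZMod d, chiC d (2 * w₁ * (x - w₂)) * (v₀ (2 * w₂ - x) * (starRingEnd ℂ) (v₀ x))) *
        (∑ y : ZMod d, chiC d (2 * w₁ * (y - w₂)) * (v₁ (2 * w₂ - y) * (starRingEnd ℂ) (v₁ y))))
      = ∑ x : ZMod d, (d : ℂ) *
          ((v₀ (2 * w₂ - x) * (starRingEnd ℂ) (v₀ x)) * (v₁ x * (starRingEnd ℂ) (v₁ (2 * w₂ - x)))) := by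
    intro w₂
    simp only [Finset.sum_mul_sum]
    rw [Finset.sum_comm]
    apply Finset.sum_congr rfl
    intro x _
    rw [Finset.sum_comm]
    have collapse : ∀ y : ZMod d,
        (∑ w₁ : ZMod d,
          (chiC d (2 * w₁ * (x - w₂)) * (v₀ (2 * w₂ - x) * (starRingEnd ℂ) (v₀ x))) *
          (chiC d (2 * w₁ * (y - w₂)) * (v₁ (2 * w₂ - y) * (starRingEnd ℂ) (v₁ y))))
        = (if y = 2 * w₂ - x then (d : ℂ) else 0) *
            ((v₀ (2 * w₂ - x) * (starRingEnd ℂ) (v₀ x)) * (v₁ (2 * w₂ - y) * (starRingEnd ℂ) (v₁ y))) := by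
      intro y
      have hterm : ∀ w₁ : ZMod d,
          (chiC d (2 * w₁ * (x - w₂)) * (v₀ (2 * w₂ - x) * (starRingEnd ℂ) (v₀ x))) *
          (chiC d (2 * w₁ * (y - w₂)) * (v₁ (2 * w₂ - y) * (starRingEnd ℂ) (v₁ y)))
          = chiC d (w₁ * (2 * (x + y - 2 * w₂))) *
              ((v₀ (2 * w₂ - x) * (starRingEnd ℂ) (v₀ x)) * (v₁ (2 * w₂ - y) * (starRingEnd ℂ) (v₁ y))) := by
        intro w₁
        have ha : w₁ * (2 * (x + y - 2 * w₂)) = 2 * w₁ * (x - w₂) + 2 * w₁ * (y - w₂) := by ring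
        rw [ha, chiC_add]
        ring
      simp only [hterm]
      rw [← Finset.sum_mul, sum_chiC]
      congr 1
      have hiff : (2 * (x + y - 2 * w₂) = 0) ↔ (y = 2 * w₂ - x) := by
        rw [two_mul_eq_zero_iff hodd]
        constructor
        · intro h; linear_combination h
        · rintro rfl; ring
      by_cases h : y = 2 * w₂ - x
      · rw [if_pos (hiff.mpr h), if_pos h]
      · rw [if_neg (fun hh => h (hiff.mp hh)), if_neg h]
    simp only [collapse]
    rw [Finset.sum_eq_single (2 * w₂ - x)]
    · rw [if_pos rfl]
      have h1 : 2 * w₂ - (2 * w₂ - x) = x := by ring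
      rw [h1]
    · intro y _ hy
      rw [if_neg hy, zero_mul]
    · intro h; exact absurd (Finset.mem_univ _) h
  have h2 := two_inv_mul_two hodd
  have hrhs : ∑ x : ZMod d, ∑ z : ZMod d,
      (d : ℂ) * ((v₀ z * (starRingEnd ℂ) (v₀ x)) * (v₁ x * (starRingEnd ℂ) (v₁ z)))
      = (d : ℂ) * ((∑ z : ZMod d, v₀ z * (starRingEnd ℂ) (v₁ z)) *
          (∑ x : ZMod d, (starRingEnd ℂ) (v₀ x) * v₁ x)) := by
    rw [Finset.sum_mul_sum, Finset.mul_sum, Finset.sum_comm]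
    apply Finset.sum_congr rfl
    intro z _
    rw [Finset.mul_sum]
    apply Finset.sum_congr rfl
    intro x _
    ring
  simp only [inner1]
  rw [Finset.sum_comm, ← hrhs]
  apply Finset.sum_congr rfl
  intro x _
  exact Fintype.sum_equiv
    ⟨fun w₂ => 2 * w₂ - x, fun z => (2 : ZMod d)⁻¹ * (z + x),
      fun w₂ => by linear_combination w₂ * h2, fun z => by linear_combination (z + x) * h2⟩
    _ _ (fun w₂ => rfl)

/-- Two orthogonal positively represented pure states cannot both have strictly positive
Wigner function at the same phase space point. -/
theorem orthogonal_positive_states (d : ℕ) [NeZero d] (hodd : Odd d) (hd : 1 < d)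
    (v₀ v₁ : ZMod d → ℂ)
    (horth : ∑ x : ZMod d, (starRingEnd ℂ) (v₀ x) * v₁ x = 0)
    (P₀ P₁ : Matrix (ZMod d) (ZMod d) ℂ)
    (hP₀ : P₀ = Matrix.of fun x y => v₀ x * (starRingEnd ℂ) (v₀ y))
    (hP₁ : P₁ = Matrix.of fun x y => v₁ x * (starRingEnd ℂ) (v₁ y))
    (hpos₀ : ∀ w : ZMod d × ZMod d, 0 ≤ ((Apoint d w * P₀).trace).re)
    (hpos₁ : ∀ w : ZMod d × ZMod d, 0 ≤ ((Apoint d w * P₁).trace).re)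
    (u : ZMod d × ZMod d) (hu : 0 < ((Apoint d u * P₀).trace).re) :
    (Apoint d u * P₁).trace = 0 := by
  set F₀ : ZMod d × ZMod d → ℂ := fun w => (Apoint d w * P₀).trace with hF₀
  set F₁ : ZMod d × ZMod d → ℂ := fun w => (Apoint d w * P₁).trace with hF₁
  have htr₀ : ∀ w, F₀ w = ∑ x : ZMod d,
      chiC d (2 * w.1 * (x - w.2)) * (v₀ (2 * w.2 - x) * (starRingEnd ℂ) (v₀ x)) := by
    intro w; rw [hF₀]; simp only [hP₀]; exact trace_Apoint_mul hodd w v₀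
  have htr₁ : ∀ w, F₁ w = ∑ x : ZMod d,
      chiC d (2 * w.1 * (x - w.2)) * (v₁ (2 * w.2 - x) * (starRingEnd ℂ) (v₁ x)) := by
    intro w; rw [hF₁]; simp only [hP₁]; exact trace_Apoint_mul hodd w v₁
  have hreal₀ : ∀ w, (F₀ w).im = 0 := by
    intro w
    have hc : (starRingEnd ℂ) (F₀ w) = F₀ w := by rw [htr₀ w]; exact trace_sum_conj w v₀
    have := congrArg Complex.im hc
    rw [Complex.conj_im] at this
    linarith
  have hreal₁ : ∀ w, (F₁ w).im = 0 := by
    intro w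
    have hc : (starRingEnd ℂ) (F₁ w) = F₁ w := by rw [htr₁ w]; exact trace_sum_conj w v₁
    have := congrArg Complex.im hc
    rw [Complex.conj_im] at this
    linarith
  have hsum : ∑ w : ZMod d × ZMod d, F₀ w * F₁ w = 0 := by
    simp only [htr₀, htr₁]
    rw [sum_trace_mul hodd v₀ v₁, horth, mul_zero, mul_zero]
  have hsum_re : ∑ w : ZMod d × ZMod d, (F₀ w).re * (F₁ w).re = 0 := by
    have h1 : ∀ w : ZMod d × ZMod d, (F₀ w).re * (F₁ w).re = (F₀ w * F₁ w).re := by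
      intro w
      rw [Complex.mul_re, hreal₀ w, hreal₁ w]
      ring
    simp only [h1]
    rw [← Complex.re_sum, hsum, Complex.zero_re]
  have hzero := (Finset.sum_eq_zero_iff_of_nonneg
    (fun w _ => mul_nonneg (hpos₀ w) (hpos₁ w))).mp hsum_re u (Finset.mem_univ u)
  have hre1 : (F₁ u).re = 0 := by
    rcases mul_eq_zero.mp hzero with h | h
    · exact absurd h (ne_of_gt hu)
    · exact h
  have : F₁ u = 0 := Complex.ext hre1 (hreal₁ u)
  exact this
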